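/- Suppose there exists an integer t₀ ≥ 1 with q_{t₀} = c and t₀ + s ≤ T. Then min over t ∈ {s + 1, …, T} of f_{(s,0)}(t) equals (T − s) c. -/

import Mathlib

open MeasureTheory ProbabilityTheory Real

/-- If some integer `t₀ ≥ 1` satisfies `q_{t₀} = c` and `t₀ + s ≤ T`, then
the minimum of `f_{(s,0)}` over `{s + 1, …, T}` equals `(T − s) c`. -/
theorem min_objective_age_zero_eq
    {Ω : Type*} [MeasureSpace Ω] [IsProbabilityMeasure (ℙ : Measure Ω)]
    (θ β g h m : ℝ) (hθ : 0 < θ) (hβ : 1 < β) (hg : 0 ≤ g) (hh : 0 ≤ h) (hm : 0 ≤ m)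
    (L : Ω → ℕ) (hmeasL : Measurable L) (hposL : ∀ ω, 1 ≤ L ω)
    (hsurvL : ∀ u : ℕ, ℙ {ω | u < L ω} = ENNReal.ofReal (Real.exp (-θ * (u : ℝ) ^ β)))
    (q : ℕ → ℝ)
    (hq : ∀ t : ℕ, 1 ≤ t →
      q t = ((1 - Real.exp (-θ * (t : ℝ) ^ β)) * g
            + Real.exp (-θ * (t : ℝ) ^ β) * (h + m * t))
          / ((∑ k ∈ Finset.Icc 1 t,
              (Real.exp (-θ * ((k : ℝ) - 1) ^ β) - Real.exp (-θ * (k : ℝ) ^ β)) * (k : ℝ))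
            + Real.exp (-θ * (t : ℝ) ^ β) * (t : ℝ)))
    (c : ℝ) (hc : c = ⨅ t : ℕ, q (t + 1))
    (T s : ℕ) (hT : 1 ≤ T) (hsT : s < T)
    (Q : ℕ → ℝ → ℝ)
    (hQ : ∀ t : ℕ, s + 1 ≤ t → t ≤ T → ∀ u : ℝ,
      Q t u = if u ≤ (t : ℝ) then g + ((T : ℝ) - u) * c
              else h + ((t : ℝ) - (s : ℝ)) * m + ((T : ℝ) - (t : ℝ)) * c)
    (f : ℕ → ℝ)
    (hf : ∀ t : ℕ, f t = ∫ ω, Q t ((s : ℝ) + (L ω : ℝ)) ∂ℙ)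
    (t₀ : ℕ) (ht₀ : 1 ≤ t₀) (hqt₀ : q t₀ = c) (ht₀T : t₀ + s ≤ T)
    (hne : (Finset.Icc (s + 1) T).Nonempty) :
    (Finset.Icc (s + 1) T).inf' hne f = ((T : ℝ) - (s : ℝ)) * c := by

  -- Abbreviations
  set E : ℕ → ℝ := fun k => Real.exp (-θ * (k : ℝ) ^ β) with hE
  have hβ0 : (0:ℝ) ≤ β := by linarith
  have hE0 : E 0 = 1 := by
    simp only [hE, Nat.cast_zero, Real.zero_rpow (by linarith : β ≠ 0), mul_zero,
      Real.exp_zero]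
  -- probability of L = k
  have hprob : ∀ k : ℕ, 1 ≤ k → (ℙ {ω | L ω = k}).toReal
      = Real.exp (-θ * ((k : ℝ) - 1) ^ β) - Real.exp (-θ * (k : ℝ) ^ β) := by
    intro k hk
    have hset : {ω | L ω = k} = {ω | k - 1 < L ω} \ {ω | k < L ω} := by
      ext ω; simp only [Set.mem_setOf_eq, Set.mem_diff]; omega
    have hsub : {ω | k < L ω} ⊆ {ω | k - 1 < L ω} := fun ω hω => by
      simp only [Set.mem_setOf_eq] at *; omega
    have hmeas : NullMeasurableSet {ω | k < L ω} (ℙ : Measure Ω) :=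
      (hmeasL measurableSet_Ioi).nullMeasurableSet
    have hfin : (ℙ : Measure Ω) {ω | k < L ω} ≠ ⊤ := measure_ne_top _ _
    rw [hset, measure_diff hsub hmeas hfin, hsurvL, hsurvL]
    have hcast : ((k - 1 : ℕ) : ℝ) = (k : ℝ) - 1 := by
      push_cast [hk]; ring
    rw [hcast]
    have hle : (-θ * (k : ℝ) ^ β) ≤ (-θ * ((k : ℝ) - 1) ^ β) := by
      have h1 : ((k : ℝ) - 1) ^ β ≤ (k : ℝ) ^ β := by
        have hk1 : (1:ℝ) ≤ (k:ℝ) := by exact_mod_cast hk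
        apply Real.rpow_le_rpow (by linarith) (by linarith) hβ0
      nlinarith
    rw [ENNReal.toReal_sub_of_le (ENNReal.ofReal_le_ofReal (Real.exp_le_exp.mpr hle))
      ENNReal.ofReal_ne_top, ENNReal.toReal_ofReal (Real.exp_nonneg _),
      ENNReal.toReal_ofReal (Real.exp_nonneg _)]
  -- nonnegativity of increments
  have hpk : ∀ k : ℕ, 1 ≤ k →
      0 ≤ Real.exp (-θ * ((k : ℝ) - 1) ^ β) - Real.exp (-θ * (k : ℝ) ^ β) := by
    intro k hk
    have h1 : ((k : ℝ) - 1) ^ β ≤ (k : ℝ) ^ β := by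
      have : (1:ℝ) ≤ (k:ℝ) := by exact_mod_cast hk
      apply Real.rpow_le_rpow (by linarith) (by linarith) hβ0
    have := Real.exp_le_exp.mpr (show (-θ * (k : ℝ) ^ β) ≤ (-θ * ((k : ℝ) - 1) ^ β) by nlinarith)
    linarith
  -- denominator
  set D : ℕ → ℝ := fun r =>
    (∑ k ∈ Finset.Icc 1 r,
      (Real.exp (-θ * ((k : ℝ) - 1) ^ β) - Real.exp (-θ * (k : ℝ) ^ β)) * (k : ℝ))
    + Real.exp (-θ * (r : ℝ) ^ β) * (r : ℝ) with hD
  have hDpos : ∀ r : ℕ, 1 ≤ r → 0 < D r := by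
    intro r hr
    have h1 : 0 ≤ ∑ k ∈ Finset.Icc 1 r,
        (Real.exp (-θ * ((k : ℝ) - 1) ^ β) - Real.exp (-θ * (k : ℝ) ^ β)) * (k : ℝ) := by
      apply Finset.sum_nonneg
      intro k hk
      rw [Finset.mem_Icc] at hk
      exact mul_nonneg (hpk k hk.1) (by positivity)
    have h2 : 0 < Real.exp (-θ * (r : ℝ) ^ β) * (r : ℝ) := by
      have : (1:ℝ) ≤ (r:ℝ) := by exact_mod_cast hr
      positivity
    rw [hD]; dsimp only; linarith
  -- q nonneg
  have hqnn : ∀ u : ℕ, 1 ≤ u → 0 ≤ q u := by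
    intro u hu
    rw [hq u hu]
    apply div_nonneg
    · have hE1 : Real.exp (-θ * (u : ℝ) ^ β) ≤ 1 := by
        apply Real.exp_le_one_iff.mpr
        have : (0:ℝ) ≤ (u : ℝ) ^ β := Real.rpow_nonneg (Nat.cast_nonneg u) β
        nlinarith
      have := Real.exp_nonneg (-θ * (u : ℝ) ^ β)
      have hmu : 0 ≤ m * (u:ℝ) := mul_nonneg hm (Nat.cast_nonneg u)
      nlinarith
    · exact (hDpos u hu).le
  -- c ≤ q u
  have hcq : ∀ u : ℕ, 1 ≤ u → c ≤ q u := by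
    intro u hu
    have hbdd : BddBelow (Set.range fun t : ℕ => q (t + 1)) := by
      refine ⟨0, ?_⟩
      rintro x ⟨t, rfl⟩
      exact hqnn (t + 1) (by omega)
    have := ciInf_le hbdd (u - 1)
    rw [hc]
    simpa [Nat.sub_add_cancel hu] using this
  -- telescoping sum
  have htel : ∀ r : ℕ, ∑ k ∈ Finset.Icc 1 r,
      (Real.exp (-θ * ((k : ℝ) - 1) ^ β) - Real.exp (-θ * (k : ℝ) ^ β)) = 1 - E r := by
    intro r
    induction r with
    | zero => simp [hE0]
    | succ n ih =>
      rw [Finset.sum_Icc_succ_top (by omega : 1 ≤ n + 1), ih]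
      have h1 : ((n + 1 : ℕ) : ℝ) - 1 = (n : ℝ) := by push_cast; ring
      rw [h1]
      simp only [hE]
      ring
  -- the key formula for f
  have fform : ∀ r : ℕ, 1 ≤ r → s + r ≤ T →
      f (s + r) = ((T : ℝ) - (s : ℝ)) * c + D r * (q r - c) := by
    intro r hr hrT
    set v : ℝ := h + (r : ℝ) * m + ((T : ℝ) - (s : ℝ) - (r : ℝ)) * c with hv
    set a : ℕ → ℝ := fun k => g + ((T : ℝ) - (s : ℝ) - (k : ℝ)) * c - v with ha
    have hQt := hQ (s + r) (by omega) hrT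
    have hpt : ∀ ω, Q (s + r) ((s : ℝ) + (L ω : ℝ))
        = v + ∑ k ∈ Finset.Icc 1 r, Set.indicator {ω' | L ω' = k} (fun _ => a k) ω := by
      intro ω
      rw [hQt]
      have hL1 := hposL ω
      have hsum : ∑ k ∈ Finset.Icc 1 r, Set.indicator {ω' | L ω' = k} (fun _ => a k) ω
          = if L ω ∈ Finset.Icc 1 r then a (L ω) else 0 := by
        simp only [Set.indicator_apply, Set.mem_setOf_eq]
        rw [Finset.sum_ite_eq (Finset.Icc 1 r) (L ω) a]
      rw [hsum]
      by_cases hca : L ω ≤ r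
      · have hmem : L ω ∈ Finset.Icc 1 r := Finset.mem_Icc.mpr ⟨hL1, hca⟩
        have hle : (s : ℝ) + (L ω : ℝ) ≤ ((s + r : ℕ) : ℝ) := by
          push_cast; have : (L ω : ℝ) ≤ (r : ℝ) := by exact_mod_cast hca
          linarith
        rw [if_pos hmem, if_pos hle]
        simp only [ha, hv]
        push_cast
        ring
      · have hmem : L ω ∉ Finset.Icc 1 r := by
          rw [Finset.mem_Icc]; omega
        have hgt : ¬ ((s : ℝ) + (L ω : ℝ) ≤ ((s + r : ℕ) : ℝ)) := by
          push_cast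
          have : (r : ℝ) < (L ω : ℝ) := by exact_mod_cast (by omega : r < L ω)
          linarith
        rw [if_neg hmem, if_neg hgt]
        simp only [hv]
        push_cast
        ring
    have hind : ∀ k : ℕ, Integrable
        (Set.indicator {ω' | L ω' = k} (fun _ => a k)) (ℙ : Measure Ω) := by
      intro k
      exact (integrable_const (a k)).indicator (hmeasL (measurableSet_singleton k))
    rw [hf]
    simp only [hpt]
    rw [integral_add (integrable_const v)
        (integrable_finset_sum _ (fun k _ => hind k)),
      integral_const, probReal_univ, one_smul,
      integral_finset_sum _ (fun k _ => hind k)]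
    have hsum2 : ∀ k ∈ Finset.Icc 1 r,
        ∫ ω, Set.indicator {ω' | L ω' = k} (fun _ => a k) ω ∂(ℙ : Measure Ω)
        = (Real.exp (-θ * ((k : ℝ) - 1) ^ β) - Real.exp (-θ * (k : ℝ) ^ β)) * a k := by
      intro k hk
      rw [Finset.mem_Icc] at hk
      rw [show {ω' | L ω' = k} = L ⁻¹' {k} from rfl,
        integral_indicator_const (a k) (hmeasL (measurableSet_singleton k)),
        smul_eq_mul, show (L ⁻¹' {k}) = {ω' | L ω' = k} from rfl, measureReal_def, hprob k hk.1]
    rw [Finset.sum_congr rfl hsum2]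
    have hsplit : ∑ k ∈ Finset.Icc 1 r,
        (Real.exp (-θ * ((k : ℝ) - 1) ^ β) - Real.exp (-θ * (k : ℝ) ^ β)) * a k
        = (g + ((T : ℝ) - (s : ℝ)) * c - v)
            * ∑ k ∈ Finset.Icc 1 r,
              (Real.exp (-θ * ((k : ℝ) - 1) ^ β) - Real.exp (-θ * (k : ℝ) ^ β))
          - c * ∑ k ∈ Finset.Icc 1 r,
              (Real.exp (-θ * ((k : ℝ) - 1) ^ β) - Real.exp (-θ * (k : ℝ) ^ β)) * (k : ℝ) := by
      rw [Finset.mul_sum, Finset.mul_sum, ← Finset.sum_sub_distrib]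
      refine Finset.sum_congr rfl (fun k _ => ?_)
      simp only [ha]
      ring
    rw [hsplit, htel r]
    have hDne : (∑ k ∈ Finset.Icc 1 r,
        (Real.exp (-θ * ((k : ℝ) - 1) ^ β) - Real.exp (-θ * (k : ℝ) ^ β)) * (k : ℝ))
        + Real.exp (-θ * (r : ℝ) ^ β) * (r : ℝ) ≠ 0 := by
      have := (hDpos r hr).ne'
      rw [hD] at this
      exact this
    rw [hq r hr]
    simp only [hD, hE, hv]
    set S2 := ∑ k ∈ Finset.Icc 1 r,
      (Real.exp (-θ * ((k : ℝ) - 1) ^ β) - Real.exp (-θ * (k : ℝ) ^ β)) * (k : ℝ) with hS2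
    set Er := Real.exp (-θ * (r : ℝ) ^ β) with hEr
    have hDne2 : S2 + Er * (r : ℝ) ≠ 0 := by
      rw [hS2, hEr]
      simpa [hD] using (hDpos r hr).ne'
    rw [mul_sub (S2 + Er * (r : ℝ)), mul_div_cancel₀ _ hDne2]
    ring
  -- conclude
  have hmem : s + t₀ ∈ Finset.Icc (s + 1) T := by
    rw [Finset.mem_Icc]; omega
  have hft₀ : f (s + t₀) = ((T : ℝ) - (s : ℝ)) * c := by
    rw [fform t₀ ht₀ (by omega), hqt₀]; ring
  apply le_antisymm
  · calc (Finset.Icc (s + 1) T).inf' hne f ≤ f (s + t₀) := Finset.inf'_le f hmem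
      _ = ((T : ℝ) - (s : ℝ)) * c := hft₀
  · apply Finset.le_inf'
    intro t ht
    rw [Finset.mem_Icc] at ht
    obtain ⟨ht1, ht2⟩ := ht
    have hts : t = s + (t - s) := by omega
    rw [hts, fform (t - s) (by omega) (by omega)]
    have h1 : 0 ≤ D (t - s) * (q (t - s) - c) :=
      mul_nonneg (hDpos (t - s) (by omega)).le (by have := hcq (t - s) (by omega); linarith)
    linarith
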